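/- arXiv:2202.01627 — 2 statements merged into one kernel-verified Lean document; each statement's English description precedes it below -/
import Mathlib

section
/- (Gaussian sign aggregation) Let d ∈ ℕ⁺, x ∈ ℝ^d with x ≠ 0, and u ∈ ℝ^d. If w is drawn from the multivariate Gaussian distribution N(u, I_d) with mean u and identity covariance, then E_w[ sign(w · x) ] = erf( (u · x) / (√2 · ‖x‖₂) ), where sign(t) = 1 for t > 0, sign(t) = −1 for t < 0, and sign(0) = 0. -/
open MeasureTheory ProbabilityTheory Real Set
open scoped ENNReal NNReal

/-- The Gaussian error function `erf(t) = (2/√π) ∫₀ᵗ e^(−s²) ds`. -/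
noncomputable def erf (t : ℝ) : ℝ :=
  2 / Real.sqrt Real.pi * ∫ s in (0 : ℝ)..t, Real.exp (-(s ^ 2))


lemma pdf_conv (μ₁ μ₂ : ℝ) {v₁ v₂ : ℝ≥0} (h₁ : v₁ ≠ 0) (h₂ : v₂ ≠ 0) (z : ℝ) :
    ∫ a, gaussianPDFReal μ₁ v₁ a * gaussianPDFReal μ₂ v₂ (z - a)
      = gaussianPDFReal (μ₁ + μ₂) (v₁ + v₂) z := by
  have hs₁ : (0:ℝ) < v₁ := lt_of_le_of_ne v₁.coe_nonneg (by exact_mod_cast h₁.symm)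
  have hs₂ : (0:ℝ) < v₂ := lt_of_le_of_ne v₂.coe_nonneg (by exact_mod_cast h₂.symm)
  set s₁ : ℝ := (v₁ : ℝ) with hs1def
  set s₂ : ℝ := (v₂ : ℝ) with hs2def
  have hS : (0:ℝ) < s₁ + s₂ := by positivity
  set m : ℝ := (μ₁*s₂ + (z-μ₂)*s₁)/(s₁+s₂) with hmdef
  set v' : ℝ := s₁*s₂/(s₁+s₂) with hv'def
  have hv' : 0 < v' := by positivity
  have key : ∀ a : ℝ, gaussianPDFReal μ₁ v₁ a * gaussianPDFReal μ₂ v₂ (z - a)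
      = ((√(2*π*s₁))⁻¹ * (√(2*π*s₂))⁻¹ * rexp (-(z - (μ₁+μ₂))^2/(2*(s₁+s₂))))
        * rexp (-(2*v')⁻¹ * (a - m)^2) := by
    intro a
    rw [gaussianPDFReal, gaussianPDFReal, ← hs1def, ← hs2def]
    have hexp : rexp (-(a - μ₁)^2/(2*s₁)) * rexp (-(z - a - μ₂)^2/(2*s₂))
        = rexp (-(z - (μ₁+μ₂))^2/(2*(s₁+s₂))) * rexp (-(2*v')⁻¹ * (a - m)^2) := by
      rw [← Real.exp_add, ← Real.exp_add]
      congr 1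
      rw [hmdef, hv'def]
      field_simp
      ring
    rw [mul_mul_mul_comm, hexp]
    ring
  simp_rw [key]
  rw [integral_const_mul, integral_sub_right_eq_self (fun a => rexp (-(2*v')⁻¹ * a^2)) m,
    integral_gaussian]
  have hc : π / (2*v')⁻¹ = 2*π*v' := by field_simp
  rw [hc, gaussianPDFReal]
  have hv12 : ((v₁ + v₂ : ℝ≥0) : ℝ) = s₁ + s₂ := by push_cast; rfl
  rw [hv12]
  have hsqrt : (√(2*π*s₁))⁻¹ * (√(2*π*s₂))⁻¹ * √(2*π*v') = (√(2*π*(s₁+s₂)))⁻¹ := by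
    rw [← Real.sqrt_inv, ← Real.sqrt_inv, ← Real.sqrt_mul (by positivity),
      ← Real.sqrt_mul (by positivity), ← Real.sqrt_inv]
    congr 1
    field_simp [hv'def]
    rw [hv'def, div_mul_cancel₀ _ hS.ne']
  rw [← hsqrt]
  ring

lemma integrable_pdf_mul (μ₁ μ₂ : ℝ) (v₁ v₂ : ℝ≥0) (z : ℝ) :
    Integrable (fun a => gaussianPDFReal μ₁ v₁ a * gaussianPDFReal μ₂ v₂ (z - a)) := by
  have h : Integrable (fun a => gaussianPDFReal μ₂ v₂ (z - a) * gaussianPDFReal μ₁ v₁ a) := by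
    refine (integrable_gaussianPDFReal μ₁ v₁).bdd_mul (c := (√(2*π*v₂))⁻¹) ?_ ?_
    · exact ((measurable_gaussianPDFReal μ₂ v₂).comp (measurable_const.sub measurable_id)).aestronglyMeasurable
    · refine ae_of_all _ fun a => ?_
      rw [Real.norm_eq_abs, abs_of_nonneg (gaussianPDFReal_nonneg _ _ _), gaussianPDFReal]
      calc (√(2*π*v₂))⁻¹ * rexp (-(z - a - μ₂)^2/(2*v₂)) ≤ (√(2*π*v₂))⁻¹ * 1 :=
            mul_le_mul_of_nonneg_left (Real.exp_le_one_iff.mpr (div_nonpos_of_nonpos_of_nonneg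
              (neg_nonpos.mpr (sq_nonneg _)) (by positivity))) (by positivity)
        _ = (√(2*π*v₂))⁻¹ := mul_one _
  simpa only [mul_comm] using h

lemma lintegral_pdf_conv (μ₁ μ₂ : ℝ) {v₁ v₂ : ℝ≥0} (h₁ : v₁ ≠ 0) (h₂ : v₂ ≠ 0) (z : ℝ) :
    ∫⁻ a, gaussianPDF μ₁ v₁ a * gaussianPDF μ₂ v₂ (z - a)
      = gaussianPDF (μ₁ + μ₂) (v₁ + v₂) z := by
  simp_rw [gaussianPDF, ← ENNReal.ofReal_mul (gaussianPDFReal_nonneg μ₁ v₁ _)]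
  rw [← ofReal_integral_eq_lintegral_ofReal (integrable_pdf_mul μ₁ μ₂ v₁ v₂ z)
    (ae_of_all _ fun a => mul_nonneg (gaussianPDFReal_nonneg _ _ _) (gaussianPDFReal_nonneg _ _ _)),
    pdf_conv μ₁ μ₂ h₁ h₂ z]

lemma gaussian_conv (μ₁ μ₂ : ℝ) (v₁ v₂ : ℝ≥0) :
    Measure.map (fun p : ℝ × ℝ => p.1 + p.2)
        ((gaussianReal μ₁ v₁).prod (gaussianReal μ₂ v₂))
      = gaussianReal (μ₁ + μ₂) (v₁ + v₂) := by
  by_cases h₁ : v₁ = 0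
  · subst h₁
    rw [gaussianReal_zero_var, Measure.dirac_prod,
      Measure.map_map (by fun_prop) (by fun_prop)]
    have : ((fun p : ℝ × ℝ => p.1 + p.2) ∘ Prod.mk μ₁) = fun b => μ₁ + b := rfl
    rw [this, gaussianReal_map_const_add, add_comm μ₂ μ₁, zero_add]
  by_cases h₂ : v₂ = 0
  · subst h₂
    rw [gaussianReal_zero_var, Measure.prod_dirac,
      Measure.map_map (by fun_prop) (by fun_prop)]
    have : ((fun p : ℝ × ℝ => p.1 + p.2) ∘ fun x => (x, μ₂)) = fun a => a + μ₂ := rfl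
    rw [this, gaussianReal_map_add_const, add_zero]
  -- main case
  ext s hs
  rw [Measure.map_apply (by fun_prop) hs, gaussianReal_apply _ (by simp [h₁, h₂]) s]
  have hprod : ((gaussianReal μ₁ v₁).prod (gaussianReal μ₂ v₂))
        ((fun p : ℝ × ℝ => p.1 + p.2) ⁻¹' s)
      = ∫⁻ a, gaussianReal μ₂ v₂ ((fun b => a + b) ⁻¹' s) ∂(gaussianReal μ₁ v₁) := by
    rw [Measure.prod_apply (by exact measurable_add hs)]
    rfl
  rw [hprod]
  have hmap : ∀ a : ℝ, gaussianReal μ₂ v₂ ((fun b => a + b) ⁻¹' s)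
      = ∫⁻ z in s, gaussianPDF μ₂ v₂ (z - a) := by
    intro a
    rw [← Measure.map_apply (by fun_prop) hs, gaussianReal_map_const_add,
      gaussianReal_apply _ h₂ s]
    congr 1 with z
    rw [gaussianPDF, gaussianPDF, gaussianPDFReal_sub]
  simp_rw [hmap]
  rw [gaussianReal_of_var_ne_zero _ h₁,
    lintegral_withDensity_eq_lintegral_mul _ (measurable_gaussianPDF _ _)]
  swap
  · exact Measurable.lintegral_prod_right (f := fun a z => gaussianPDF μ₂ v₂ (z - a))
      ((measurable_gaussianPDF μ₂ v₂).comp (measurable_snd.sub measurable_fst))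
  simp only [Pi.mul_apply]
  have hswap : ∫⁻ a, gaussianPDF μ₁ v₁ a * ∫⁻ z in s, gaussianPDF μ₂ v₂ (z - a)
      = ∫⁻ z in s, ∫⁻ a, gaussianPDF μ₁ v₁ a * gaussianPDF μ₂ v₂ (z - a) := by
    have hmeas : Measurable (fun p : ℝ × ℝ => gaussianPDF μ₁ v₁ p.2 * gaussianPDF μ₂ v₂ (p.1 - p.2)) :=
      ((measurable_gaussianPDF μ₁ v₁).comp measurable_snd).mul
        ((measurable_gaussianPDF μ₂ v₂).comp (measurable_fst.sub measurable_snd))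
    have hinner : ∀ a : ℝ, gaussianPDF μ₁ v₁ a * ∫⁻ z in s, gaussianPDF μ₂ v₂ (z - a)
        = ∫⁻ z in s, gaussianPDF μ₁ v₁ a * gaussianPDF μ₂ v₂ (z - a) := fun a =>
      (lintegral_const_mul _ ((measurable_gaussianPDF μ₂ v₂).comp
        (measurable_id.sub_const _))).symm
    simp_rw [hinner]
    exact (lintegral_lintegral_swap hmeas.aemeasurable).symm
  rw [hswap]
  congr 1 with z
  exact lintegral_pdf_conv μ₁ μ₂ h₁ h₂ z

lemma map_sum_pi : ∀ (d : ℕ) (x u : Fin d → ℝ),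
    Measure.map (fun w : Fin d → ℝ => ∑ i, w i * x i)
        (Measure.pi fun i => gaussianReal (u i) 1)
      = gaussianReal (∑ i, u i * x i) (∑ i, (⟨(x i)^2, sq_nonneg _⟩ : ℝ≥0)) := by
  intro d
  induction d with
  | zero =>
    intro x u
    simp only [Finset.univ_eq_empty, Finset.sum_empty]
    rw [show (fun _ : Fin 0 → ℝ => (0:ℝ)) = fun _ => (0:ℝ) from rfl, Measure.map_const,
      measure_univ, one_smul, ← gaussianReal_zero_var]
    rfl
  | succ n ih =>
    intro x u
    have hmp := measurePreserving_piFinSuccAbove (fun i : Fin (n+1) => gaussianReal (u i) 1) 0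
    set e := MeasurableEquiv.piFinSuccAbove (fun _ : Fin (n+1) => ℝ) 0 with he
    have hsum : Measurable (fun w : Fin (n+1) → ℝ => ∑ i, w i * x i) := by fun_prop
    have h1 : Measure.map (fun w : Fin (n+1) → ℝ => ∑ i, w i * x i)
          (Measure.pi fun i => gaussianReal (u i) 1)
        = Measure.map ((fun w : Fin (n+1) → ℝ => ∑ i, w i * x i) ∘ e.symm)
          ((gaussianReal (u 0) 1).prod (Measure.pi fun j : Fin n => gaussianReal (u (Fin.succAbove 0 j)) 1)) := by
      rw [← hmp.map_eq, Measure.map_map (hsum.comp e.symm.measurable) e.measurable]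
      congr 1
      ext w
      simp
    rw [h1]
    have h2 : ((fun w : Fin (n+1) → ℝ => ∑ i, w i * x i) ∘ e.symm)
        = (fun p : ℝ × ℝ => p.1 + p.2) ∘ (Prod.map (fun a : ℝ => a * x 0)
            (fun w : Fin n → ℝ => ∑ j, w j * x (Fin.succAbove 0 j))) := by
      ext p
      simp only [Function.comp_apply, Prod.map_apply]
      have : e.symm p = Fin.insertNth 0 p.1 p.2 := rfl
      rw [this, Fin.sum_univ_succ]
      simp [Fin.insertNth_zero']
    rw [h2, ← Measure.map_map (by fun_prop) (by fun_prop),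
      ← Measure.map_prod_map _ _ (by fun_prop) (by fun_prop),
      gaussianReal_map_mul_const (x 0), ih, gaussian_conv, Fin.sum_univ_succ (f := fun i => u i * x i)]
    congr 1
    · rw [mul_comm]
      congr 1
    · rw [mul_one]
      exact (Fin.sum_univ_succ (f := fun i => (⟨(x i)^2, sq_nonneg _⟩ : ℝ≥0))).symm

lemma integral_sign_gaussian (μ : ℝ) (v : ℝ≥0) (hv : v ≠ 0) :
    ∫ z, Real.sign z ∂(gaussianReal μ v) = erf (μ / (Real.sqrt 2 * Real.sqrt v)) := by
  have hσ : (0:ℝ) < v := lt_of_le_of_ne v.coe_nonneg (by exact_mod_cast hv.symm)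
  -- reduce to a Lebesgue integral against the density
  rw [gaussianReal_of_var_ne_zero _ hv]
  have hpdf : gaussianPDF μ v = fun z => ((gaussianPDFReal μ v z).toNNReal : ℝ≥0∞) := rfl
  rw [hpdf, integral_withDensity_eq_integral_smul
    ((measurable_gaussianPDFReal μ v).real_toNNReal) Real.sign]
  have hsmul : ∀ z, (gaussianPDFReal μ v z).toNNReal • Real.sign z
      = Set.indicator (Ioi 0) (gaussianPDFReal μ v) z
        - Set.indicator (Iio 0) (gaussianPDFReal μ v) z := by
    intro z
    rw [NNReal.smul_def, Real.coe_toNNReal _ (gaussianPDFReal_nonneg μ v z)]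
    rcases lt_trichotomy z 0 with h | h | h
    · rw [Real.sign_of_neg h, indicator_of_notMem (by simp [h.not_gt]),
        indicator_of_mem (mem_Iio.2 h)]
      simp [smul_eq_mul]
    · subst h
      simp
    · rw [Real.sign_of_pos h, indicator_of_mem (mem_Ioi.2 h),
        indicator_of_notMem (by simp [h.not_gt])]
      simp [smul_eq_mul]
  simp_rw [hsmul]
  rw [integral_sub ((integrable_gaussianPDFReal μ v).indicator measurableSet_Ioi)
    ((integrable_gaussianPDFReal μ v).indicator measurableSet_Iio),
    integral_indicator measurableSet_Ioi, integral_indicator measurableSet_Iio]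
  set pdf0 : ℝ → ℝ := gaussianPDFReal 0 v with hpdf0
  have hshift : ∀ z : ℝ, gaussianPDFReal μ v z = pdf0 (z + (-μ)) := by
    intro z
    rw [hpdf0, ← sub_eq_add_neg, gaussianPDFReal_sub, zero_add]
  simp_rw [hshift]
  have hint : Integrable pdf0 := integrable_gaussianPDFReal 0 v
  have htrans : ∀ s : Set ℝ, MeasurableSet s →
      ∫ z in (fun z : ℝ => z + (-μ)) ⁻¹' s, pdf0 (z + (-μ)) = ∫ y in s, pdf0 y := by
    intro s hs
    exact (measurePreserving_add_right volume (-μ)).setIntegral_preimage_emb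
      (measurableEmbedding_addRight (-μ)) pdf0 s
  have h1 : ∫ z in Ioi (0:ℝ), pdf0 (z + (-μ)) = ∫ y in Ioi (-μ), pdf0 y := by
    rw [show Ioi (0:ℝ) = (fun z : ℝ => z + (-μ)) ⁻¹' (Ioi (-μ)) by ext z; simp]
    exact htrans _ measurableSet_Ioi
  have h2 : ∫ z in Iio (0:ℝ), pdf0 (z + (-μ)) = ∫ y in Iio (-μ), pdf0 y := by
    rw [show Iio (0:ℝ) = (fun z : ℝ => z + (-μ)) ⁻¹' (Iio (-μ)) by ext z; simp]
    exact htrans _ measurableSet_Iio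
  rw [h1, h2]
  have heven : ∀ z : ℝ, pdf0 (-z) = pdf0 z := by
    intro z
    rw [hpdf0, gaussianPDFReal, gaussianPDFReal]
    congr 2
    ring
  have h3 : ∫ z in Iio (-μ), pdf0 z = ∫ z in Ioi μ, pdf0 z := by
    rw [← integral_Iic_eq_integral_Iio, ← integral_comp_neg_Ioi]
    exact integral_congr_ae (Filter.Eventually.of_forall fun x => heven x)
  rw [h3]
  have hIoi : ∀ a : ℝ, ∫ z in Ioi a, pdf0 z = (∫ z, pdf0 z) - ∫ z in Iic a, pdf0 z := by
    intro a
    have h := integral_add_compl (measurableSet_Iic (a := a)) hint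
    rw [compl_Iic] at h
    linarith
  rw [hIoi, hIoi]
  have h4 : (∫ z, pdf0 z) - (∫ z in Iic (-μ), pdf0 z)
      - ((∫ z, pdf0 z) - ∫ z in Iic μ, pdf0 z)
      = (∫ z in Iic μ, pdf0 z) - ∫ z in Iic (-μ), pdf0 z := by ring
  rw [h4, intervalIntegral.integral_Iic_sub_Iic hint.integrableOn hint.integrableOn]
  -- now an interval integral from -μ to μ
  set c : ℝ := Real.sqrt 2 * Real.sqrt v with hcdef
  have hc : 0 < c := by positivity
  have hc2 : c ^ 2 = 2 * v := by
    rw [hcdef, mul_pow, sq_sqrt (by norm_num), sq_sqrt v.coe_nonneg]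
  set t : ℝ := μ / c with htdef
  have hct : c * t = μ := by rw [htdef, mul_div_cancel₀ _ hc.ne']
  have hform : pdf0 = fun z => (√(2*π*v))⁻¹ * rexp (-(z^2)/(2*(v:ℝ))) := by
    funext z
    rw [hpdf0, gaussianPDFReal]
    norm_num
  rw [hform]
  rw [intervalIntegral.integral_const_mul]
  have h5 : ∫ z in (-μ)..μ, rexp (-(z^2)/(2*(v:ℝ)))
      = c * ∫ s in (-t)..t, rexp (-(s^2)) := by
    have h6 := intervalIntegral.integral_comp_mul_left
      (fun z => rexp (-(z^2)/(2*(v:ℝ)))) hc.ne' (a := -t) (b := t)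
    have h7 : ∀ s : ℝ, rexp (-((c*s)^2)/(2*(v:ℝ))) = rexp (-(s^2)) := by
      intro s
      congr 1
      rw [mul_pow, hc2]
      field_simp
    simp_rw [h7] at h6
    rw [mul_neg, hct] at h6
    rw [h6, smul_eq_mul, ← mul_assoc, mul_inv_cancel₀ hc.ne', one_mul]
  rw [h5]
  have hcont : Continuous fun s : ℝ => rexp (-(s^2)) := by fun_prop
  have hneg : ∫ s in (-t)..(0:ℝ), rexp (-(s^2)) = ∫ s in (0:ℝ)..t, rexp (-(s^2)) := by
    have h8 := intervalIntegral.integral_comp_neg (a := (0:ℝ)) (b := t)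
      (fun s : ℝ => rexp (-(s^2)))
    simp only [neg_sq, neg_zero] at h8
    exact h8.symm
  have hsplit : ∫ s in (-t)..t, rexp (-(s^2)) = 2 * ∫ s in (0:ℝ)..t, rexp (-(s^2)) := by
    have hi1 : IntervalIntegrable (fun s : ℝ => rexp (-(s^2))) volume (-t) 0 :=
      hcont.intervalIntegrable _ _
    have hi2 : IntervalIntegrable (fun s : ℝ => rexp (-(s^2))) volume 0 t :=
      hcont.intervalIntegrable _ _
    have hadj := intervalIntegral.integral_add_adjacent_intervals hi1 hi2
    rw [hneg] at hadj
    linarith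
  rw [hsplit, erf]
  have hsqv : √(2*π*(v:ℝ)) = √2 * √π * √(v:ℝ) := by
    rw [show (2:ℝ)*π*(v:ℝ) = 2*(π*(v:ℝ)) by ring, Real.sqrt_mul (by norm_num),
      Real.sqrt_mul pi_pos.le, mul_assoc]
  rw [hsqv, hcdef]
  have h2pos : (0:ℝ) < √2 := by positivity
  have hppos : (0:ℝ) < √π := Real.sqrt_pos.2 pi_pos
  have hvpos : (0:ℝ) < √(v:ℝ) := Real.sqrt_pos.2 hσ
  field_simp


lemma measurable_realSign : Measurable Real.sign := by
  have h : Real.sign = fun r : ℝ => ite (r < 0) (-1:ℝ) (ite (0 < r) 1 0) := funext fun r => rfl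
  rw [h]
  exact Measurable.ite measurableSet_Iio measurable_const
    (Measurable.ite measurableSet_Ioi measurable_const measurable_const)

/-- Gaussian sign aggregation: if `w ∼ N(u, I_d)` then
`E_w[sign(w · x)] = erf((u · x)/(√2 ‖x‖₂))`. -/
theorem gaussian_sign_aggregation (d : ℕ) (hd : 0 < d) (x u : Fin d → ℝ) (hx : x ≠ 0) :
    (∫ w, Real.sign (∑ i, w i * x i) ∂(Measure.pi fun i : Fin d => gaussianReal (u i) 1)) =
      erf ((∑ i, u i * x i) / (Real.sqrt 2 * Real.sqrt (∑ i, (x i) ^ 2))) := by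
  have hv : (∑ i, (⟨(x i)^2, sq_nonneg _⟩ : ℝ≥0)) ≠ 0 := by
    intro h
    apply hx
    funext i
    have h2 := (Finset.sum_eq_zero_iff (s := Finset.univ)
      (f := fun i => (⟨(x i)^2, sq_nonneg _⟩ : ℝ≥0))).1 h i (Finset.mem_univ i)
    have h3 : (x i)^2 = 0 := congrArg NNReal.toReal h2
    exact pow_eq_zero_iff (n := 2) (by norm_num) |>.1 h3
  have hmeas : Measurable (fun w : Fin d → ℝ => ∑ i, w i * x i) := by fun_prop
  rw [← integral_map hmeas.aemeasurable measurable_realSign.aestronglyMeasurable,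
    map_sum_pi d x u]
  refine (integral_sign_gaussian _ _ hv).trans ?_
  congr 3
  exact congrArg Real.sqrt (NNReal.coe_sum Finset.univ (fun i => (⟨(x i)^2, sq_nonneg _⟩ : ℝ≥0)))
end

section
/- (Explicit KL bound for the binary SHEL mixture) Let d, K ∈ ℕ⁺, β > 0, u_1,…,u_K, u⁰_1,…,u⁰_K ∈ ℝ^d, v ∈ ℝ^K with v ≠ 0, and v⁰ ∈ ℝ^K with v⁰_k ≠ 0 for all k. Let Q be the mixture on ℝ^d whose component k ∈ {1,…,K} is N(u_k, (1/(2β²))I_d) with weight max(0,v_k)/‖v‖₁ and whose component K+k is N(−u_k, (1/(2β²))I_d) with weight max(0,−v_k)/‖v‖₁; let P be the mixture whose component k is N(u⁰_k, (1/(2β²))I_d) with weight |v⁰_k|/(2‖v⁰‖₁) and whose component K+k is N(−u⁰_k, (1/(2β²))I_d) with weight |v⁰_k|/(2‖v⁰‖₁). Then KL(Q, P) ≤ Σ_{k=1}^K (|v_k|/‖v‖₁) · ( β² ‖u_k − u⁰_k‖₂² + log( 2 (|v_k|/‖v‖₁) / (|v⁰_k|/‖v⁰‖₁) ) ). -/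
open MeasureTheory ProbabilityTheory
open scoped ENNReal NNReal Classical

/-- Kullback-Leibler divergence between two measures, `+∞` if `Q` is not absolutely
continuous with respect to `P` (or if the log-likelihood ratio is not integrable). -/
noncomputable def KLdiv {Ω : Type*} [MeasurableSpace Ω] (Q P : Measure Ω) : ℝ≥0∞ :=
  if Q ≪ P ∧ Integrable (llr Q P) Q then ENNReal.ofReal (∫ ω, llr Q P ω ∂Q) else ⊤

/-- The multivariate Gaussian `N(μ, σ²I_d)` on `ℝ^d`, as a product of independent
one-dimensional Gaussians with means `μ i` and common variance `σ²`. -/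
noncomputable def gaussPi {d : ℕ} (μ : Fin d → ℝ) (v : ℝ≥0) : Measure (Fin d → ℝ) :=
  Measure.pi fun i => gaussianReal (μ i) v

namespace SHELAux
open Real

theorem lintegral_fin_pi_prod {α : Type*} [MeasurableSpace α] {d : ℕ}
    (μ : Measure α) [SigmaFinite μ]
    (g : Fin d → α → ℝ≥0∞) (hg : ∀ i, Measurable (g i)) :
    ∫⁻ x : Fin d → α, ∏ i, g i (x i) ∂Measure.pi (fun _ => μ) = ∏ i, ∫⁻ y, g i y ∂μ := by
  induction d with
  | zero => simp
  | succ n ih =>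
    have h := (measurePreserving_piFinSuccAbove (fun _ : Fin (n+1) => μ) 0).symm
    have hmeas : Measurable fun x : Fin (n+1) → α => ∏ i, g i (x i) :=
      Finset.measurable_prod _ fun i _ => (hg i).comp (measurable_pi_apply i)
    rw [← h.lintegral_comp hmeas]
    simp_rw [MeasurableEquiv.piFinSuccAbove_symm_apply, Fin.insertNthEquiv,
      Fin.prod_univ_succ, Fin.insertNth_zero]
    simp only [Fin.zero_succAbove, Function.comp_def, Fin.cons_zero, Fin.cons_succ,
      Equiv.coe_fn_mk, cast_eq]
    have hmeas2 : Measurable fun y : Fin n → α => ∏ i, g i.succ (y i) :=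
      Finset.measurable_prod _ fun i _ => (hg i.succ).comp (measurable_pi_apply i)
    rw [lintegral_prod_mul (f := g 0) (g := fun y : Fin n → α => ∏ i, g i.succ (y i))
      (hg 0).aemeasurable hmeas2.aemeasurable]
    rw [ih (fun i : Fin n => g i.succ) (fun i => hg i.succ)]

noncomputable def gφ {d : ℕ} (v : ℝ≥0) (m : Fin d → ℝ) : (Fin d → ℝ) → ℝ :=
  fun x => ∏ i, gaussianPDFReal (m i) v (x i)

theorem gaussPi_eq_withDensity {d : ℕ} (m : Fin d → ℝ) {v : ℝ≥0} (hv : v ≠ 0) :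
    gaussPi m v = (volume : Measure (Fin d → ℝ)).withDensity
      (fun x => ENNReal.ofReal (gφ v m x)) := by
  simp only [gφ]
  have hmeas : ∀ i : Fin d, Measurable (gaussianPDF (m i) v) := fun i => measurable_gaussianPDF _ _
  rw [gaussPi]
  refine (Measure.pi_eq fun s hs => ?_)
  rw [withDensity_apply _ (MeasurableSet.univ_pi hs)]
  have h1 : ∀ x : Fin d → ℝ, ENNReal.ofReal (∏ i, gaussianPDFReal (m i) v (x i))
      = ∏ i, gaussianPDF (m i) v (x i) := by
    intro x
    rw [ENNReal.ofReal_prod_of_nonneg (fun i _ => gaussianPDFReal_nonneg _ _ _)]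
    rfl
  calc ∫⁻ x in Set.univ.pi s, ENNReal.ofReal (∏ i, gaussianPDFReal (m i) v (x i))
        ∂(volume : Measure (Fin d → ℝ))
      = ∫⁻ x : Fin d → ℝ, ∏ i, (s i).indicator (gaussianPDF (m i) v) (x i)
        ∂Measure.pi (fun _ => (volume : Measure ℝ)) := by
        rw [← volume_pi, ← lintegral_indicator (MeasurableSet.univ_pi hs)]
        congr 1
        ext x
        simp only [h1]
        by_cases hx : x ∈ Set.univ.pi s
        · rw [Set.indicator_of_mem hx]
          exact Finset.prod_congr rfl fun i _ =>
            (Set.indicator_of_mem (hx i (Set.mem_univ i)) _).symm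
        · rw [Set.indicator_of_notMem hx]
          rw [Set.mem_pi] at hx
          push_neg at hx
          obtain ⟨i, _, hi⟩ := hx
          exact (Finset.prod_eq_zero (Finset.mem_univ i)
            (by rw [Set.indicator_of_notMem hi])).symm
    _ = ∏ i, ∫⁻ y, (s i).indicator (gaussianPDF (m i) v) y ∂volume :=
        lintegral_fin_pi_prod _ _ fun i => (hmeas i).indicator (hs i)
    _ = ∏ i, gaussianReal (m i) v (s i) := by
        refine Finset.prod_congr rfl fun i _ => ?_
        rw [lintegral_indicator (hs i), gaussianReal_apply _ hv]

lemma integrable_sq_mul_exp {b : ℝ} (hb : 0 < b) :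
    Integrable (fun x : ℝ => x ^ 2 * Real.exp (-b * x ^ 2)) := by
  have hb2 : 0 < b / 2 := by positivity
  refine Integrable.mono' ((integrable_exp_neg_mul_sq hb2).const_mul (2 / b)) ?_ ?_
  · have : Continuous fun x : ℝ => x ^ 2 * Real.exp (-b * x ^ 2) := by fun_prop
    exact this.aestronglyMeasurable
  · refine ae_of_all _ fun x => ?_
    have h1 : (0:ℝ) ≤ x ^ 2 * Real.exp (-b * x ^ 2) := by positivity
    rw [Real.norm_eq_abs, abs_of_nonneg h1]
    have h2 : x ^ 2 ≤ 2 / b * Real.exp (b / 2 * x ^ 2) := by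
      have := Real.add_one_le_exp (b / 2 * x ^ 2)
      have h3 : b / 2 * x ^ 2 ≤ Real.exp (b / 2 * x ^ 2) := by nlinarith
      calc x ^ 2 = 2 / b * (b / 2 * x ^ 2) := by field_simp
        _ ≤ 2 / b * Real.exp (b / 2 * x ^ 2) := by
            apply mul_le_mul_of_nonneg_left h3; positivity
    calc x ^ 2 * Real.exp (-b * x ^ 2)
        ≤ 2 / b * Real.exp (b / 2 * x ^ 2) * Real.exp (-b * x ^ 2) := by
          apply mul_le_mul_of_nonneg_right h2 (Real.exp_nonneg _)
      _ = 2 / b * Real.exp (-(b / 2) * x ^ 2) := by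
          rw [mul_assoc, ← Real.exp_add]; ring_nf

section OneD
variable {v : ℝ≥0}

lemma vpos (hv : v ≠ 0) : 0 < (v : ℝ) := by positivity
lemma bpos (hv : v ≠ 0) : 0 < (2 * (v : ℝ))⁻¹ := by
  have := vpos hv; positivity

lemma gauss_rw (μ : ℝ) (t : ℝ) : gaussianPDFReal μ v t
    = (√(2 * π * v))⁻¹ * Real.exp (-(2 * (v : ℝ))⁻¹ * (t - μ) ^ 2) := by
  rw [gaussianPDFReal]
  congr 1
  ring

lemma integrable_gauss_mul_sub (hv : v ≠ 0) (μ : ℝ) :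
    Integrable (fun t => gaussianPDFReal μ v t * (t - μ)) := by
  have hb := bpos hv
  have h : Integrable (fun s : ℝ =>
      (√(2 * π * v))⁻¹ * (s * Real.exp (-(2 * (v : ℝ))⁻¹ * s ^ 2))) :=
    (integrable_mul_exp_neg_mul_sq hb).const_mul _
  exact (h.comp_sub_right μ).congr (ae_of_all _ fun t => by simp only [gauss_rw]; ring)

lemma integral_id_mul_exp_zero {b : ℝ} : ∫ s : ℝ, s * Real.exp (-b * s ^ 2) = 0 := by
  have h := integral_neg_eq_self (fun s : ℝ => s * Real.exp (-b * s ^ 2)) volume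
  simp only [neg_sq, neg_mul] at h
  rw [integral_neg] at h
  simp only [neg_mul] at h ⊢
  linarith

lemma integral_gauss_mul_sub (hv : v ≠ 0) (μ : ℝ) :
    ∫ t, gaussianPDFReal μ v t * (t - μ) = 0 := by
  calc ∫ t, gaussianPDFReal μ v t * (t - μ)
      = ∫ t, (√(2 * π * v))⁻¹ *
          ((t - μ) * Real.exp (-(2 * (v : ℝ))⁻¹ * (t - μ) ^ 2)) := by
        refine integral_congr_ae (ae_of_all _ fun t => ?_)
        simp only [gauss_rw]; ring
    _ = (√(2 * π * v))⁻¹ *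
          ∫ t, (t - μ) * Real.exp (-(2 * (v : ℝ))⁻¹ * (t - μ) ^ 2) := integral_const_mul _ _
    _ = (√(2 * π * v))⁻¹ * ∫ s : ℝ, s * Real.exp (-(2 * (v : ℝ))⁻¹ * s ^ 2) := by
        rw [integral_sub_right_eq_self (fun s : ℝ =>
          s * Real.exp (-(2 * (v : ℝ))⁻¹ * s ^ 2)) μ]
    _ = 0 := by rw [integral_id_mul_exp_zero, mul_zero]

lemma integrable_gauss_mul_sq (hv : v ≠ 0) (μ a : ℝ) :
    Integrable (fun t => gaussianPDFReal μ v t * (t - a) ^ 2) := by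
  have hb := bpos hv
  set c := (√(2 * π * (v : ℝ)))⁻¹ with hc
  set b := (2 * (v : ℝ))⁻¹ with hbdef
  have hF : Integrable (fun s : ℝ => c * (s ^ 2 * Real.exp (-b * s ^ 2))
      + (2 * (μ - a)) * c * (s * Real.exp (-b * s ^ 2))
      + ((μ - a) ^ 2 * c) * Real.exp (-b * s ^ 2)) :=
    (((integrable_sq_mul_exp hb).const_mul c).add
      ((integrable_mul_exp_neg_mul_sq hb).const_mul _)).add
      ((integrable_exp_neg_mul_sq hb).const_mul _)
  exact (hF.comp_sub_right μ).congr (ae_of_all _ fun t => by simp only [gauss_rw]; ring)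

lemma integral_gauss_mul_sq_sub (hv : v ≠ 0) (μ a : ℝ) :
    ∫ t, gaussianPDFReal μ v t * ((t - a) ^ 2 - (t - μ) ^ 2) = (μ - a) ^ 2 := by
  have h1 : ∀ t : ℝ, gaussianPDFReal μ v t * ((t - a) ^ 2 - (t - μ) ^ 2)
      = (2 * (μ - a)) * (gaussianPDFReal μ v t * (t - μ))
        + (μ - a) ^ 2 * gaussianPDFReal μ v t := fun t => by ring
  calc ∫ t, gaussianPDFReal μ v t * ((t - a) ^ 2 - (t - μ) ^ 2)
      = ∫ t, ((2 * (μ - a)) * (gaussianPDFReal μ v t * (t - μ))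
          + (μ - a) ^ 2 * gaussianPDFReal μ v t) :=
        integral_congr_ae (ae_of_all _ h1)
    _ = (2 * (μ - a)) * (∫ t, gaussianPDFReal μ v t * (t - μ))
          + (μ - a) ^ 2 * (∫ t, gaussianPDFReal μ v t) := by
        rw [integral_add (((integrable_gauss_mul_sub hv μ).const_mul _))
          ((integrable_gaussianPDFReal μ v).const_mul _),
          integral_const_mul, integral_const_mul]
    _ = (μ - a) ^ 2 := by
        rw [integral_gauss_mul_sub hv, integral_gaussianPDFReal_eq_one μ hv]
        ring

end OneD

variable {d : ℕ} {v : ℝ≥0} {m m' α : Fin d → ℝ}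

lemma gφ_pos (hv : v ≠ 0) (x : Fin d → ℝ) : 0 < gφ v m x :=
  Finset.prod_pos fun i _ => gaussianPDFReal_pos _ _ _ hv

lemma gφ_nonneg (x : Fin d → ℝ) : 0 ≤ gφ v m x :=
  Finset.prod_nonneg fun i _ => gaussianPDFReal_nonneg _ _ _

lemma gauss1_le (μ : ℝ) (t : ℝ) : gaussianPDFReal μ v t ≤ (√(2 * π * v))⁻¹ := by
  rw [gaussianPDFReal]
  calc (√(2 * π * v))⁻¹ * Real.exp (-(t - μ) ^ 2 / (2 * v))
      ≤ (√(2 * π * v))⁻¹ * 1 := by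
        apply mul_le_mul_of_nonneg_left _ (by positivity)
        rw [Real.exp_le_one_iff]
        by_cases hv : (v : ℝ) = 0
        · simp [hv]
        · have : 0 < (v:ℝ) := lt_of_le_of_ne v.2 (Ne.symm hv)
          exact div_nonpos_of_nonpos_of_nonneg (neg_nonpos.mpr (sq_nonneg _)) (by positivity)
    _ = (√(2 * π * v))⁻¹ := mul_one _

lemma gφ_le (x : Fin d → ℝ) : gφ v m x ≤ ((√(2 * π * v))⁻¹) ^ d := by
  calc gφ v m x ≤ ∏ _i : Fin d, (√(2 * π * (v:ℝ)))⁻¹ :=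
        Finset.prod_le_prod (fun i _ => gaussianPDFReal_nonneg _ _ _)
          (fun i _ => gauss1_le _ _)
    _ = ((√(2 * π * v))⁻¹) ^ d := by rw [Finset.prod_const, Finset.card_univ, Fintype.card_fin]

lemma continuous_gauss1 (μ : ℝ) : Continuous (gaussianPDFReal μ v) := by
  unfold gaussianPDFReal
  fun_prop

lemma continuous_gφ : Continuous (gφ v m) := by
  apply continuous_finset_prod
  exact fun i _ => (continuous_gauss1 (m i)).comp (continuous_apply i)

lemma integrable_gφ : Integrable (gφ v m) := by
  exact Integrable.fintype_prod (f := fun i => gaussianPDFReal (m i) v)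
    fun i => integrable_gaussianPDFReal _ _

lemma integral_gφ (hv : v ≠ 0) : ∫ x, gφ v m x = 1 := by
  simp only [gφ]
  rw [volume_pi, MeasureTheory.integral_fintype_prod_eq_prod (f := fun i => gaussianPDFReal (m i) v)]
  exact Finset.prod_eq_one fun i _ => integral_gaussianPDFReal_eq_one _ hv

lemma gφ_mul_eq_prod (h : ℝ → ℝ) (i : Fin d) (x : Fin d → ℝ) :
    gφ v m x * h (x i) = ∏ j, Function.update
      (fun j t => gaussianPDFReal (m j) v t) i (fun t => gaussianPDFReal (m i) v t * h t)
      j (x j) := by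
  set F := Function.update (fun j t => gaussianPDFReal (m j) v t) i
    (fun t => gaussianPDFReal (m i) v t * h t) with hF
  rw [← Finset.mul_prod_erase Finset.univ (fun j => F j (x j)) (Finset.mem_univ i)]
  have h1 : F i (x i) = gaussianPDFReal (m i) v (x i) * h (x i) := by
    rw [hF, Function.update_self]
  have h2 : ∀ j ∈ Finset.univ.erase i, F j (x j) = gaussianPDFReal (m j) v (x j) := by
    intro j hj
    rw [hF, Function.update_of_ne (Finset.ne_of_mem_erase hj)]
  rw [h1, Finset.prod_congr rfl h2, gφ,
    ← Finset.mul_prod_erase Finset.univ (fun j => gaussianPDFReal (m j) v (x j))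
      (Finset.mem_univ i)]
  ring

lemma integrable_gφ_mul (h : ℝ → ℝ) (i : Fin d)
    (hint : Integrable (fun t => gaussianPDFReal (m i) v t * h t)) :
    Integrable (fun x : Fin d → ℝ => gφ v m x * h (x i)) := by
  have := Integrable.fintype_prod (μ := fun _ => volume) (f := Function.update
      (fun j t => gaussianPDFReal (m j) v t) i (fun t => gaussianPDFReal (m i) v t * h t))
    (fun j => ?_)
  · exact this.congr (ae_of_all _ fun x => (gφ_mul_eq_prod h i x).symm)
  · by_cases hj : j = i
    · subst hj; rw [Function.update_self]; exact hint
    · rw [Function.update_of_ne hj]; exact integrable_gaussianPDFReal _ _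

lemma integral_gφ_mul (hv : v ≠ 0) (h : ℝ → ℝ) (i : Fin d) :
    ∫ x : Fin d → ℝ, gφ v m x * h (x i) = ∫ t, gaussianPDFReal (m i) v t * h t := by
  rw [integral_congr_ae (ae_of_all _ fun x => gφ_mul_eq_prod h i x),
    volume_pi, MeasureTheory.integral_fintype_prod_eq_prod]
  rw [← Finset.mul_prod_erase Finset.univ _ (Finset.mem_univ i), Function.update_self]
  rw [Finset.prod_congr rfl (fun j hj => by
    rw [Function.update_of_ne (Finset.ne_of_mem_erase hj)]), Finset.prod_congr rfl
    (fun j (hj : j ∈ Finset.univ.erase i) => integral_gaussianPDFReal_eq_one (m j) hv),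
    Finset.prod_const_one, mul_one]


lemma integrable_gauss_mul_diffsq {v : ℝ≥0} (hv : v ≠ 0) (μ a : ℝ) :
    Integrable (fun t => gaussianPDFReal μ v t * ((t - a) ^ 2 - (t - μ) ^ 2)) :=
  ((integrable_gauss_mul_sq hv μ a).sub (integrable_gauss_mul_sq hv μ μ)).congr
    (ae_of_all _ fun t => by simp only [Pi.sub_apply]; ring)

lemma integrable_gφ_mul_sumsq {d : ℕ} {v : ℝ≥0} {m : Fin d → ℝ} (hv : v ≠ 0) (α : Fin d → ℝ) :
    Integrable (fun x : Fin d → ℝ => gφ v m x * ∑ i, (x i - α i) ^ 2) := by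
  have h := integrable_finset_sum (μ := (volume : Measure (Fin d → ℝ))) Finset.univ
    (f := fun i (x : Fin d → ℝ) => gφ v m x * (x i - α i) ^ 2)
    (fun i _ => integrable_gφ_mul _ i (integrable_gauss_mul_sq hv _ _))
  exact h.congr (ae_of_all _ fun x => (Finset.mul_sum _ _ _).symm)

lemma integrable_gφ_mul_diffsq {d : ℕ} {v : ℝ≥0} {m m' : Fin d → ℝ} (hv : v ≠ 0) :
    Integrable (fun x : Fin d → ℝ =>
      gφ v m x * ∑ i, ((x i - m' i) ^ 2 - (x i - m i) ^ 2)) := by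
  have h := integrable_finset_sum (μ := (volume : Measure (Fin d → ℝ))) Finset.univ
    (f := fun i (x : Fin d → ℝ) => gφ v m x * ((x i - m' i) ^ 2 - (x i - m i) ^ 2))
    (fun i _ => integrable_gφ_mul _ i (integrable_gauss_mul_diffsq hv _ _))
  exact h.congr (ae_of_all _ fun x => (Finset.mul_sum _ _ _).symm)

lemma integral_gφ_mul_diffsq {d : ℕ} {v : ℝ≥0} {m m' : Fin d → ℝ} (hv : v ≠ 0) :
    ∫ x : Fin d → ℝ, gφ v m x * ∑ i, ((x i - m' i) ^ 2 - (x i - m i) ^ 2)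
      = ∑ i, (m i - m' i) ^ 2 := by
  have : ∀ x : Fin d → ℝ, gφ v m x * ∑ i, ((x i - m' i) ^ 2 - (x i - m i) ^ 2)
      = ∑ i, gφ v m x * ((x i - m' i) ^ 2 - (x i - m i) ^ 2) := fun x => Finset.mul_sum _ _ _
  rw [integral_congr_ae (ae_of_all _ this),
    integral_finset_sum _ (fun i _ => integrable_gφ_mul _ i (integrable_gauss_mul_diffsq hv _ _))]
  exact Finset.sum_congr rfl fun i _ =>
    (integral_gφ_mul hv (fun t => (t - m' i) ^ 2 - (t - m i) ^ 2) i).trans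
      (integral_gauss_mul_sq_sub hv _ _)

lemma log_gauss1 {v : ℝ≥0} (hv : v ≠ 0) (μ t : ℝ) :
    Real.log (gaussianPDFReal μ v t)
      = Real.log ((√(2 * π * v))⁻¹) - (2 * (v : ℝ))⁻¹ * (t - μ) ^ 2 := by
  have hvp : 0 < (v : ℝ) := vpos hv
  have hc : ((√(2 * π * (v:ℝ)))⁻¹ : ℝ) ≠ 0 := by positivity
  rw [gauss_rw, Real.log_mul hc (Real.exp_ne_zero _), Real.log_exp]
  ring

lemma log_gφ {d : ℕ} {v : ℝ≥0} {m : Fin d → ℝ} (hv : v ≠ 0) (x : Fin d → ℝ) :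
    Real.log (gφ v m x) = (d : ℝ) * Real.log ((√(2 * π * v))⁻¹)
      - (2 * (v : ℝ))⁻¹ * ∑ i, (x i - m i) ^ 2 := by
  rw [gφ, Real.log_prod fun i _ => (gaussianPDFReal_pos _ _ _ hv).ne']
  simp_rw [log_gauss1 hv]
  rw [Finset.sum_sub_distrib, Finset.sum_const, Finset.card_univ, Fintype.card_fin,
    ← Finset.mul_sum, nsmul_eq_mul]

lemma log_gφ_sub {d : ℕ} {v : ℝ≥0} {m m' : Fin d → ℝ} (hv : v ≠ 0) (x : Fin d → ℝ) :
    Real.log (gφ v m x) - Real.log (gφ v m' x)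
      = (2 * (v : ℝ))⁻¹ * ∑ i, ((x i - m' i) ^ 2 - (x i - m i) ^ 2) := by
  rw [log_gφ hv, log_gφ hv, Finset.sum_sub_distrib, mul_sub]
  ring

lemma log_sum_inequality {ι : Type*} [Fintype ι] [Nonempty ι] (p q : ι → ℝ)
    (hp : ∀ k, 0 ≤ p k) (hq : ∀ k, 0 < q k) :
    (∑ k, p k) * (Real.log (∑ k, p k) - Real.log (∑ k, q k))
      ≤ ∑ k, p k * (Real.log (p k) - Real.log (q k)) := by
  set S := ∑ k, p k with hSdef
  set T := ∑ k, q k with hTdef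
  have hT : 0 < T := Finset.sum_pos (fun k _ => hq k) ⟨Classical.arbitrary ι, Finset.mem_univ _⟩
  have hS0 : 0 ≤ S := Finset.sum_nonneg fun k _ => hp k
  have key : ∀ k, p k * (Real.log S - Real.log T)
      - p k * (Real.log (p k) - Real.log (q k)) ≤ q k * S / T - p k := by
    intro k
    rcases eq_or_lt_of_le (hp k) with h0 | hpk
    · rw [← h0]
      have : (0:ℝ) ≤ q k * S / T := div_nonneg (mul_nonneg (hq k).le hS0) hT.le
      simpa using this
    · have hS : 0 < S := lt_of_lt_of_le hpk (Finset.single_le_sum (fun k _ => hp k) (Finset.mem_univ k))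
      have hz : 0 < q k * S / (T * p k) := div_pos (mul_pos (hq k) hS) (mul_pos hT hpk)
      have hlog := Real.log_le_sub_one_of_pos hz
      have hzeq : Real.log (q k * S / (T * p k))
          = Real.log (q k) + Real.log S - (Real.log T + Real.log (p k)) := by
        rw [Real.log_div (mul_pos (hq k) hS).ne' (mul_pos hT hpk).ne',
          Real.log_mul (ne_of_gt (hq k)) (ne_of_gt hS),
          Real.log_mul (ne_of_gt hT) (ne_of_gt hpk)]
      rw [hzeq] at hlog
      have h2 := mul_le_mul_of_nonneg_left hlog (le_of_lt hpk)
      have h3 : p k * (q k * S / (T * p k) - 1) = q k * S / T - p k := by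
        field_simp
      rw [h3] at h2
      nlinarith [h2]
  have hsum := Finset.sum_le_sum fun k (_ : k ∈ Finset.univ) => key k
  have e1 : ∑ k, (p k * (Real.log S - Real.log T)
      - p k * (Real.log (p k) - Real.log (q k)))
      = S * (Real.log S - Real.log T) - ∑ k, p k * (Real.log (p k) - Real.log (q k)) := by
    rw [Finset.sum_sub_distrib, ← Finset.sum_mul]
  have e2 : ∑ k, (q k * S / T - p k) = 0 := by
    have h4 : ∑ k, q k * S / T = S := by
      rw [← Finset.sum_div, ← Finset.sum_mul, ← hTdef, mul_comm, mul_div_assoc,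
        div_self hT.ne', mul_one]
    rw [Finset.sum_sub_distrib, h4, ← hSdef, sub_self]
  rw [e1, e2] at hsum
  linarith

lemma withDensity_finset_sum' {α : Type*} [MeasurableSpace α] (μ : Measure α) {ι : Type*}
    (s : Finset ι) {f : ι → α → ℝ≥0∞} (hf : ∀ i, Measurable (f i)) :
    μ.withDensity (fun x => ∑ i ∈ s, f i x) = ∑ i ∈ s, μ.withDensity (f i) := by
  classical
  induction s using Finset.induction with
  | empty => simp
  | @insert a s h ih =>
    simp only [Finset.sum_insert h]
    have he : (fun x => f a x + ∑ i ∈ s, f i x) = (f a + fun x => ∑ i ∈ s, f i x) := rfl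
    rw [he, withDensity_add_left (hf _), ih]

theorem KLdiv_mixture_le {d : ℕ} {ι : Type*} [Fintype ι] [Nonempty ι]
    {v : ℝ≥0} (hv : v ≠ 0)
    (a b : ι → ℝ) (ha : ∀ k, 0 ≤ a k) (hb : ∀ k, 0 < b k) (hsa : ∑ k, a k = 1)
    (m m' : ι → Fin d → ℝ) :
    KLdiv (∑ k, ENNReal.ofReal (a k) • gaussPi (m k) v)
          (∑ k, ENNReal.ofReal (b k) • gaussPi (m' k) v)
      ≤ ENNReal.ofReal (∑ k, a k * ((Real.log (a k) - Real.log (b k))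
          + (2 * (v : ℝ))⁻¹ * ∑ i, (m k i - m' k i) ^ 2)) := by
  classical
  set Q : Measure (Fin d → ℝ) := ∑ k, ENNReal.ofReal (a k) • gaussPi (m k) v with hQdef
  set P : Measure (Fin d → ℝ) := ∑ k, ENNReal.ofReal (b k) • gaussPi (m' k) v with hPdef
  set f : (Fin d → ℝ) → ℝ := fun x => ∑ k, a k * gφ v (m k) x with hfdef
  set g : (Fin d → ℝ) → ℝ := fun x => ∑ k, b k * gφ v (m' k) x with hgdef
  have hvp : 0 < (v : ℝ) := vpos hv
  -- basic positivity
  obtain ⟨k0, hak0⟩ : ∃ k0, 0 < a k0 := by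
    by_contra h
    push_neg at h
    have : ∀ k ∈ Finset.univ, a k = 0 := fun k _ => le_antisymm (h k) (ha k)
    rw [Finset.sum_congr rfl this] at hsa
    simp at hsa
  set k1 : ι := Classical.arbitrary ι with hk1def
  have hfpos : ∀ x, 0 < f x := by
    intro x
    have h1 : a k0 * gφ v (m k0) x ≤ f x :=
      Finset.single_le_sum (f := fun k => a k * gφ v (m k) x)
        (fun k _ => mul_nonneg (ha k) (gφ_nonneg x)) (Finset.mem_univ k0)
    exact lt_of_lt_of_le (mul_pos hak0 (gφ_pos hv x)) h1
  have hgpos : ∀ x, 0 < g x := fun x =>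
    Finset.sum_pos (fun k _ => mul_pos (hb k) (gφ_pos hv x)) Finset.univ_nonempty
  -- measurability
  have hφmeas : ∀ (mm : Fin d → ℝ), Measurable (gφ v mm) := fun mm => continuous_gφ.measurable
  have hfc : Continuous f := continuous_finset_sum _ fun k _ => continuous_const.mul continuous_gφ
  have hgc : Continuous g := continuous_finset_sum _ fun k _ => continuous_const.mul continuous_gφ
  have hfm : Measurable f := hfc.measurable
  have hgm : Measurable g := hgc.measurable
  -- measures as densities
  have hsummand : ∀ (w : ι → ℝ) (hw : ∀ k, 0 ≤ w k) (mm : ι → Fin d → ℝ) (k : ι),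
      ENNReal.ofReal (w k) • gaussPi (mm k) v
        = volume.withDensity (fun x => ENNReal.ofReal (w k * gφ v (mm k) x)) := by
    intro w hw mm k
    rw [gaussPi_eq_withDensity _ hv, ← withDensity_smul _ (hφmeas (mm k)).ennreal_ofReal]
    congr 1
    funext x
    rw [Pi.smul_apply, smul_eq_mul, ← ENNReal.ofReal_mul (hw k)]
  have hQeq : Q = volume.withDensity (fun x => ENNReal.ofReal (f x)) := by
    rw [hQdef, Finset.sum_congr rfl fun k _ => hsummand a ha m k,
      ← withDensity_finset_sum' volume Finset.univ (f := fun k x => ENNReal.ofReal (a k * gφ v (m k) x))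
        (fun k => (measurable_const.mul (hφmeas (m k))).ennreal_ofReal)]
    congr 1
    funext x
    rw [← ENNReal.ofReal_sum_of_nonneg fun k _ => mul_nonneg (ha k) (gφ_nonneg x)]
  have hPeq : P = volume.withDensity (fun x => ENNReal.ofReal (g x)) := by
    rw [hPdef, Finset.sum_congr rfl fun k _ => hsummand b (fun k => (hb k).le) m' k,
      ← withDensity_finset_sum' volume Finset.univ (f := fun k x => ENNReal.ofReal (b k * gφ v (m' k) x))
        (fun k => (measurable_const.mul (hφmeas (m' k))).ennreal_ofReal)]
    congr 1
    funext x
    rw [← ENNReal.ofReal_sum_of_nonneg fun k _ => mul_nonneg (hb k).le (gφ_nonneg x)]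
  -- P is a finite measure
  haveI hPfin : IsFiniteMeasure P := by
    constructor
    rw [hPdef, Measure.finset_sum_apply]
    refine ENNReal.sum_lt_top.2 fun k _ => ?_
    rw [Measure.smul_apply, smul_eq_mul]
    have : gaussPi (m' k) v Set.univ = 1 := by
      have : IsProbabilityMeasure (gaussPi (m' k) v) := by
        rw [gaussPi]
        infer_instance
      exact this.measure_univ
    rw [this, mul_one]
    exact ENNReal.ofReal_lt_top
  -- absolute continuity
  have hvolP : (volume : Measure (Fin d → ℝ)) ≪ P := by
    rw [hPeq]
    exact withDensity_absolutelyContinuous' hgm.ennreal_ofReal.aemeasurable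
      (ae_of_all _ fun x => (ENNReal.ofReal_pos.mpr (hgpos x)).ne')
  have hQP : Q ≪ P := by
    rw [hQeq]
    exact (withDensity_absolutelyContinuous volume _).trans hvolP
  -- Radon–Nikodym derivative
  have hhmeas : Measurable fun x => ENNReal.ofReal (f x) / ENNReal.ofReal (g x) :=
    hfm.ennreal_ofReal.div hgm.ennreal_ofReal
  have hQP2 : Q = P.withDensity (fun x => ENNReal.ofReal (f x) / ENNReal.ofReal (g x)) := by
    rw [hPeq, ← withDensity_mul _ hgm.ennreal_ofReal hhmeas, hQeq]
    congr 1
    funext x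
    simp only [Pi.mul_apply]
    exact (ENNReal.mul_div_cancel (ENNReal.ofReal_pos.mpr (hgpos x)).ne' ENNReal.ofReal_ne_top).symm
  have hrn : Q.rnDeriv P =ᵐ[P] fun x => ENNReal.ofReal (f x) / ENNReal.ofReal (g x) := by
    rw [hQP2]
    exact Measure.rnDeriv_withDensity P hhmeas
  have hllr : llr Q P =ᵐ[Q] fun x => Real.log (f x) - Real.log (g x) := by
    filter_upwards [hQP.ae_eq hrn] with x hx
    rw [llr_def]
    simp only
    rw [hx, ENNReal.toReal_div, ENNReal.toReal_ofReal (hfpos x).le,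
      ENNReal.toReal_ofReal (hgpos x).le, Real.log_div (hfpos x).ne' (hgpos x).ne']
  -- bounds on log f, log g
  set c : ℝ := (√(2 * Real.pi * (v : ℝ)))⁻¹ with hcdef
  have hc : 0 < c := by rw [hcdef]; positivity
  have hfub : ∀ x, Real.log (f x) ≤ (d : ℝ) * Real.log c := by
    intro x
    have h1 : f x ≤ c ^ d := by
      calc f x ≤ ∑ k, a k * c ^ d :=
            Finset.sum_le_sum fun k _ => mul_le_mul_of_nonneg_left (gφ_le x) (ha k)
        _ = c ^ d := by rw [← Finset.sum_mul, hsa, one_mul]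
    calc Real.log (f x) ≤ Real.log (c ^ d) := Real.log_le_log (hfpos x) h1
      _ = (d : ℝ) * Real.log c := by rw [Real.log_pow]
  have hgub : ∀ x, Real.log (g x) ≤ Real.log (∑ k, b k) + (d : ℝ) * Real.log c := by
    intro x
    have hbs : 0 < ∑ k, b k := Finset.sum_pos (fun k _ => hb k) Finset.univ_nonempty
    have h1 : g x ≤ (∑ k, b k) * c ^ d := by
      calc g x ≤ ∑ k, b k * c ^ d :=
            Finset.sum_le_sum fun k _ => mul_le_mul_of_nonneg_left (gφ_le x) (hb k).le
        _ = (∑ k, b k) * c ^ d := by rw [← Finset.sum_mul]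
    calc Real.log (g x) ≤ Real.log ((∑ k, b k) * c ^ d) := Real.log_le_log (hgpos x) h1
      _ = Real.log (∑ k, b k) + (d : ℝ) * Real.log c := by
          rw [Real.log_mul hbs.ne' (by positivity), Real.log_pow]
  have hflb : ∀ x, Real.log (a k0) + ((d : ℝ) * Real.log c
      - (2 * (v : ℝ))⁻¹ * ∑ i, (x i - m k0 i) ^ 2) ≤ Real.log (f x) := by
    intro x
    have h1 : a k0 * gφ v (m k0) x ≤ f x :=
      Finset.single_le_sum (f := fun k => a k * gφ v (m k) x)
        (fun k _ => mul_nonneg (ha k) (gφ_nonneg x)) (Finset.mem_univ k0)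
    calc Real.log (a k0) + ((d : ℝ) * Real.log c
          - (2 * (v : ℝ))⁻¹ * ∑ i, (x i - m k0 i) ^ 2)
        = Real.log (a k0 * gφ v (m k0) x) := by
          rw [Real.log_mul hak0.ne' (gφ_pos hv x).ne', log_gφ hv]
      _ ≤ Real.log (f x) := Real.log_le_log (mul_pos hak0 (gφ_pos hv x)) h1
  have hglb : ∀ x, Real.log (b k1) + ((d : ℝ) * Real.log c
      - (2 * (v : ℝ))⁻¹ * ∑ i, (x i - m' k1 i) ^ 2) ≤ Real.log (g x) := by
    intro x
    have h1 : b k1 * gφ v (m' k1) x ≤ g x :=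
      Finset.single_le_sum (f := fun k => b k * gφ v (m' k) x)
        (fun k _ => mul_nonneg (hb k).le (gφ_nonneg x)) (Finset.mem_univ k1)
    calc Real.log (b k1) + ((d : ℝ) * Real.log c
          - (2 * (v : ℝ))⁻¹ * ∑ i, (x i - m' k1 i) ^ 2)
        = Real.log (b k1 * gφ v (m' k1) x) := by
          rw [Real.log_mul (hb k1).ne' (gφ_pos hv x).ne', log_gφ hv]
      _ ≤ Real.log (g x) := Real.log_le_log (mul_pos (hb k1) (gφ_pos hv x)) h1
  -- dominating function
  set C0 : ℝ := |Real.log (b k1)| + |Real.log (∑ k, b k) - Real.log (a k0)| with hC0def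
  set W : (Fin d → ℝ) → ℝ := fun x => C0 + (2 * (v : ℝ))⁻¹ *
    ((∑ i, (x i - m' k1 i) ^ 2) + (∑ i, (x i - m k0 i) ^ 2)) with hWdef
  have habs : ∀ x, |Real.log (f x) - Real.log (g x)| ≤ W x := by
    intro x
    have h1 := hfub x
    have h2 := hgub x
    have h3 := hflb x
    have h4 := hglb x
    have hq1 : (0:ℝ) ≤ (2 * (v : ℝ))⁻¹ * ∑ i, (x i - m' k1 i) ^ 2 :=
      mul_nonneg (by positivity) (Finset.sum_nonneg fun i _ => sq_nonneg _)
    have hq2 : (0:ℝ) ≤ (2 * (v : ℝ))⁻¹ * ∑ i, (x i - m k0 i) ^ 2 :=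
      mul_nonneg (by positivity) (Finset.sum_nonneg fun i _ => sq_nonneg _)
    have hsplit : (2 * (v : ℝ))⁻¹ *
        ((∑ i, (x i - m' k1 i) ^ 2) + (∑ i, (x i - m k0 i) ^ 2))
        = (2 * (v : ℝ))⁻¹ * (∑ i, (x i - m' k1 i) ^ 2)
          + (2 * (v : ℝ))⁻¹ * (∑ i, (x i - m k0 i) ^ 2) := mul_add _ _ _
    have habs1 : Real.log (b k1) ≤ |Real.log (b k1)| := le_abs_self _
    have habs2 : -|Real.log (b k1)| ≤ Real.log (b k1) := neg_abs_le _
    have habs3 : Real.log (∑ k, b k) - Real.log (a k0)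
        ≤ |Real.log (∑ k, b k) - Real.log (a k0)| := le_abs_self _
    have habs4 : -|Real.log (∑ k, b k) - Real.log (a k0)|
        ≤ Real.log (∑ k, b k) - Real.log (a k0) := neg_abs_le _
    rw [abs_le]
    constructor
    · simp only [hWdef, hC0def]
      linarith [hsplit]
    · simp only [hWdef, hC0def]
      linarith [hsplit]
  -- integrability of dominated bound
  have hWint : ∀ (mm : Fin d → ℝ), Integrable (fun x => gφ v mm x * W x) := by
    intro mm
    have h1 : Integrable (fun x : Fin d → ℝ => C0 * gφ v mm x
        + (2 * (v : ℝ))⁻¹ * ((gφ v mm x * ∑ i, (x i - m' k1 i) ^ 2)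
          + (gφ v mm x * ∑ i, (x i - m k0 i) ^ 2))) :=
      (integrable_gφ.const_mul C0).add
        (((integrable_gφ_mul_sumsq hv (m' k1)).add (integrable_gφ_mul_sumsq hv (m k0))).const_mul _)
    refine h1.congr (ae_of_all _ fun x => ?_)
    simp only [hWdef]
    ring
  have hfW : Integrable (fun x => f x * W x) := by
    have h1 : Integrable (fun x : Fin d → ℝ => ∑ k, a k * (gφ v (m k) x * W x)) :=
      integrable_finset_sum _ fun k _ => (hWint (m k)).const_mul (a k)
    refine h1.congr (ae_of_all _ fun x => ?_)
    simp only [hfdef]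
    rw [Finset.sum_mul]
    exact Finset.sum_congr rfl fun k _ => by ring
  have hmain_meas : AEStronglyMeasurable
      (fun x => f x * (Real.log (f x) - Real.log (g x))) (volume : Measure (Fin d → ℝ)) :=
    (hfm.mul ((Real.measurable_log.comp hfm).sub (Real.measurable_log.comp hgm))).aestronglyMeasurable
  have hmain_int : Integrable (fun x => f x * (Real.log (f x) - Real.log (g x))) := by
    refine hfW.mono' hmain_meas (ae_of_all _ fun x => ?_)
    rw [Real.norm_eq_abs, abs_mul, abs_of_nonneg (hfpos x).le]
    exact mul_le_mul_of_nonneg_left (habs x) (hfpos x).le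
  -- integrability of llr
  have hQd : (fun x => ENNReal.ofReal (f x)) = (fun x => ((f x).toNNReal : ℝ≥0∞)) := rfl
  have hfNNmeas : Measurable fun x => (f x).toNNReal := hfm.real_toNNReal
  have hint_iff : Integrable (fun x => Real.log (f x) - Real.log (g x)) Q := by
    rw [hQeq, hQd, integrable_withDensity_iff_integrable_smul hfNNmeas]
    refine hmain_int.congr (ae_of_all _ fun x => ?_)
    simp only [NNReal.smul_def, smul_eq_mul]
    rw [Real.coe_toNNReal _ (hfpos x).le]
  have hllr_int : Integrable (llr Q P) Q := hint_iff.congr hllr.symm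
  -- value of the integral
  have hint_eq : ∫ x, llr Q P x ∂Q = ∫ x, f x * (Real.log (f x) - Real.log (g x)) := by
    rw [integral_congr_ae hllr, hQeq, hQd,
      integral_withDensity_eq_integral_smul hfNNmeas]
    refine integral_congr_ae (ae_of_all _ fun x => ?_)
    simp only [NNReal.smul_def, smul_eq_mul]
    rw [Real.coe_toNNReal _ (hfpos x).le]
  -- pointwise log-sum bound
  set R : (Fin d → ℝ) → ℝ := fun x => ∑ k, (a k * gφ v (m k) x) *
    (Real.log (a k * gφ v (m k) x) - Real.log (b k * gφ v (m' k) x)) with hRdef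
  have hpt : ∀ x, f x * (Real.log (f x) - Real.log (g x)) ≤ R x := by
    intro x
    exact log_sum_inequality (fun k => a k * gφ v (m k) x) (fun k => b k * gφ v (m' k) x)
      (fun k => mul_nonneg (ha k) (gφ_nonneg x)) (fun k => mul_pos (hb k) (gφ_pos hv x))
  -- per-term identity
  have hterm : ∀ k, 0 < a k → ∀ x, (a k * gφ v (m k) x) *
      (Real.log (a k * gφ v (m k) x) - Real.log (b k * gφ v (m' k) x))
      = (a k * (Real.log (a k) - Real.log (b k))) * gφ v (m k) x
        + (a k * (2 * (v : ℝ))⁻¹) *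
          (gφ v (m k) x * ∑ i, ((x i - m' k i) ^ 2 - (x i - m k i) ^ 2)) := by
    intro k hak x
    have hd := log_gφ_sub (m := m k) (m' := m' k) hv x
    rw [Real.log_mul hak.ne' (gφ_pos hv x).ne', Real.log_mul (hb k).ne' (gφ_pos hv x).ne']
    linear_combination (a k * gφ v (m k) x) * hd
  have hRterm_int : ∀ k, Integrable (fun x => (a k * gφ v (m k) x) *
      (Real.log (a k * gφ v (m k) x) - Real.log (b k * gφ v (m' k) x))) := by
    intro k
    rcases eq_or_lt_of_le (ha k) with h0 | hak
    · refine (integrable_zero _ ℝ (volume : Measure (Fin d → ℝ))).congr (ae_of_all _ fun x => ?_)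
      rw [← h0]
      simp
    · have h1 : Integrable (fun x : Fin d → ℝ =>
          (a k * (Real.log (a k) - Real.log (b k))) * gφ v (m k) x
          + (a k * (2 * (v : ℝ))⁻¹) *
            (gφ v (m k) x * ∑ i, ((x i - m' k i) ^ 2 - (x i - m k i) ^ 2))) :=
        (integrable_gφ.const_mul _).add ((integrable_gφ_mul_diffsq hv).const_mul _)
      exact h1.congr (ae_of_all _ fun x => (hterm k hak x).symm)
  have hRint : Integrable R :=
    (integrable_finset_sum _ fun k _ => hRterm_int k).congr (ae_of_all _ fun x => rfl)
  have hRval : ∫ x, R x = ∑ k, a k * ((Real.log (a k) - Real.log (b k))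
      + (2 * (v : ℝ))⁻¹ * ∑ i, (m k i - m' k i) ^ 2) := by
    rw [hRdef]
    rw [integral_finset_sum _ fun k _ => hRterm_int k]
    refine Finset.sum_congr rfl fun k _ => ?_
    rcases eq_or_lt_of_le (ha k) with h0 | hak
    · rw [← h0]
      simp
    · rw [integral_congr_ae (ae_of_all _ fun x => hterm k hak x),
        integral_add ((integrable_gφ.const_mul _))
          ((integrable_gφ_mul_diffsq hv).const_mul _),
        integral_const_mul, integral_const_mul, integral_gφ hv, integral_gφ_mul_diffsq hv]
      ring
  -- conclusion
  rw [KLdiv, if_pos ⟨hQP, hllr_int⟩]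
  apply ENNReal.ofReal_le_ofReal
  rw [hint_eq, ← hRval]
  exact integral_mono hmain_int hRint hpt

end SHELAux

open SHELAux in
/-- Explicit KL bound for the binary SHEL mixture:
`KL(Q, P) ≤ Σ_k (|v_k|/‖v‖₁)(β²‖u_k − u⁰_k‖₂² + log(2(|v_k|/‖v‖₁)/(|v⁰_k|/‖v⁰‖₁)))`. -/
theorem kl_bound_binary_shel_mixture
    (d K : ℕ) (hd : 0 < d) (hK : 0 < K) (β : ℝ) (hβ : 0 < β)
    (u u0 : Fin K → Fin d → ℝ)
    (v : Fin K → ℝ) (hv : v ≠ 0)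
    (v0 : Fin K → ℝ) (hv0 : ∀ k, v0 k ≠ 0) :
    KLdiv
      ((∑ k : Fin K, ENNReal.ofReal (max 0 (v k) / ∑ j, |v j|) •
            gaussPi (u k) (Real.toNNReal (1 / (2 * β ^ 2)))) +
        ∑ k : Fin K, ENNReal.ofReal (max 0 (-v k) / ∑ j, |v j|) •
            gaussPi (fun i => -(u k i)) (Real.toNNReal (1 / (2 * β ^ 2))))
      ((∑ k : Fin K, ENNReal.ofReal (|v0 k| / (2 * ∑ j, |v0 j|)) •
            gaussPi (u0 k) (Real.toNNReal (1 / (2 * β ^ 2)))) +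
        ∑ k : Fin K, ENNReal.ofReal (|v0 k| / (2 * ∑ j, |v0 j|)) •
            gaussPi (fun i => -(u0 k i)) (Real.toNNReal (1 / (2 * β ^ 2)))) ≤
      ENNReal.ofReal
        (∑ k, (|v k| / ∑ j, |v j|) *
          (β ^ 2 * (∑ i, (u k i - u0 k i) ^ 2) +
            Real.log (2 * (|v k| / ∑ j, |v j|) / (|v0 k| / ∑ j, |v0 j|)))) := by
  classical
  haveI : Nonempty (Fin K) := Fin.pos_iff_nonempty.mp hK
  set S : ℝ := ∑ j, |v j| with hSdef
  set S0 : ℝ := ∑ j, |v0 j| with hS0def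
  have hS : 0 < S := by
    obtain ⟨j, hj⟩ := Function.ne_iff.mp hv
    exact Finset.sum_pos' (fun i _ => abs_nonneg _)
      ⟨j, Finset.mem_univ j, abs_pos.mpr hj⟩
  have hS0 : 0 < S0 :=
    Finset.sum_pos (fun j _ => abs_pos.mpr (hv0 j)) Finset.univ_nonempty
  set σ2 : ℝ≥0 := Real.toNNReal (1 / (2 * β ^ 2)) with hσ2def
  have hpos : 0 < 1 / (2 * β ^ 2) := by positivity
  have hσ2 : σ2 ≠ 0 := by
    rw [hσ2def]
    exact (Real.toNNReal_pos.mpr hpos).ne'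
  have hσ2coe : (σ2 : ℝ) = 1 / (2 * β ^ 2) := Real.coe_toNNReal _ hpos.le
  have hσinv : (2 * (σ2 : ℝ))⁻¹ = β ^ 2 := by
    rw [hσ2coe]
    field_simp
  set a : Fin K ⊕ Fin K → ℝ :=
    Sum.elim (fun k => max 0 (v k) / S) (fun k => max 0 (-v k) / S) with hadef
  set b : Fin K ⊕ Fin K → ℝ :=
    Sum.elim (fun k => |v0 k| / (2 * S0)) (fun k => |v0 k| / (2 * S0)) with hbdef
  set mμ : Fin K ⊕ Fin K → Fin d → ℝ :=
    Sum.elim u (fun k => fun i => -(u k i)) with hmdef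
  set mμ' : Fin K ⊕ Fin K → Fin d → ℝ :=
    Sum.elim u0 (fun k => fun i => -(u0 k i)) with hm'def
  have ha : ∀ κ, 0 ≤ a κ := by
    rintro (k | k) <;>
      exact div_nonneg (le_max_left _ _) hS.le
  have hb : ∀ κ, 0 < b κ := by
    rintro (k | k) <;>
      exact div_pos (abs_pos.mpr (hv0 _)) (by positivity)
  have hmax : ∀ t : ℝ, max 0 t + max 0 (-t) = |t| := by
    intro t
    rcases le_total 0 t with h | h
    · rw [max_eq_right h, max_eq_left (neg_nonpos.mpr h), abs_of_nonneg h, add_zero]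
    · rw [max_eq_left h, max_eq_right (neg_nonneg.mpr h), abs_of_nonpos h, zero_add]
  have hsa : ∑ κ, a κ = 1 := by
    rw [Fintype.sum_sum_type]
    simp only [hadef, Sum.elim_inl, Sum.elim_inr]
    rw [← Finset.sum_add_distrib]
    have : ∀ k ∈ Finset.univ, max 0 (v k) / S + max 0 (-v k) / S = |v k| / S := by
      intro k _
      rw [← add_div, hmax]
    rw [Finset.sum_congr rfl this, ← Finset.sum_div, ← hSdef, div_self hS.ne']
  have hQm : (∑ k : Fin K, ENNReal.ofReal (max 0 (v k) / S) • gaussPi (u k) σ2) +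
      ∑ k : Fin K, ENNReal.ofReal (max 0 (-v k) / S) • gaussPi (fun i => -(u k i)) σ2
      = ∑ κ : Fin K ⊕ Fin K, ENNReal.ofReal (a κ) • gaussPi (mμ κ) σ2 := by
    rw [Fintype.sum_sum_type]
    simp only [hadef, hmdef, Sum.elim_inl, Sum.elim_inr]
  have hPm : (∑ k : Fin K, ENNReal.ofReal (|v0 k| / (2 * S0)) • gaussPi (u0 k) σ2) +
      ∑ k : Fin K, ENNReal.ofReal (|v0 k| / (2 * S0)) • gaussPi (fun i => -(u0 k i)) σ2
      = ∑ κ : Fin K ⊕ Fin K, ENNReal.ofReal (b κ) • gaussPi (mμ' κ) σ2 := by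
    rw [Fintype.sum_sum_type]
    simp only [hbdef, hm'def, Sum.elim_inl, Sum.elim_inr]
  have hfinal : ∑ κ, a κ * ((Real.log (a κ) - Real.log (b κ))
      + (2 * (σ2 : ℝ))⁻¹ * ∑ i, (mμ κ i - mμ' κ i) ^ 2)
      = ∑ k, (|v k| / S) *
          (β ^ 2 * (∑ i, (u k i - u0 k i) ^ 2) +
            Real.log (2 * (|v k| / S) / (|v0 k| / S0))) := by
    rw [Fintype.sum_sum_type]
    simp only [hadef, hbdef, hmdef, hm'def, Sum.elim_inl, Sum.elim_inr]
    rw [← Finset.sum_add_distrib]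
    refine Finset.sum_congr rfl fun k _ => ?_
    have hDk : ∑ i, (-(u k i) - -(u0 k i)) ^ 2 = ∑ i, (u k i - u0 k i) ^ 2 :=
      Finset.sum_congr rfl fun i _ => by ring
    have hb0 : (0:ℝ) < |v0 k| / (2 * S0) := div_pos (abs_pos.mpr (hv0 _)) (by positivity)
    rcases lt_trichotomy (v k) 0 with hneg | hzero | hpos2
    · rw [max_eq_left hneg.le, max_eq_right (neg_nonneg.mpr hneg.le), abs_of_neg hneg]
      have hx : (0:ℝ) < -v k / S := div_pos (by linarith) hS
      have hlog : Real.log (-v k / S) - Real.log (|v0 k| / (2 * S0))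
          = Real.log (2 * (-v k / S) / (|v0 k| / S0)) := by
        rw [← Real.log_div hx.ne' hb0.ne']
        congr 1
        field_simp [hS.ne', hS0.ne', (abs_pos.mpr (hv0 k)).ne']
      rw [hσinv, hDk, hlog, zero_div]
      ring
    · simp [hzero]
    · rw [max_eq_right hpos2.le, max_eq_left (neg_nonpos.mpr hpos2.le), abs_of_pos hpos2]
      have hx : (0:ℝ) < v k / S := div_pos hpos2 hS
      have hlog : Real.log (v k / S) - Real.log (|v0 k| / (2 * S0))
          = Real.log (2 * (v k / S) / (|v0 k| / S0)) := by
        rw [← Real.log_div hx.ne' hb0.ne']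
        congr 1
        field_simp [hS.ne', hS0.ne', (abs_pos.mpr (hv0 k)).ne']
      rw [hσinv, hDk, hlog, zero_div]
      ring
  rw [hQm, hPm]
  refine le_trans (KLdiv_mixture_le hσ2 a b ha hb hsa mμ mμ') (le_of_eq ?_)
  rw [hfinal]
end
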